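/- Let P be a finite poset. If the incomparability orthoset (P, ⊥) is not Dacey, then P contains an N, i.e., there exist a, b, c, d ∈ P with a < c, b ⋖ c, b < d, and all other distinct pairs among {a,b,c,d} incomparable. -/

import Mathlib

/-- The orthocomplement of a subset in an orthoset `(O, r)`. -/
def perp {O : Type*} (r : O → O → Prop) (X : Set O) : Set O :=
  {y | ∀ x ∈ X, r y x}

/-- Incomparability relation of a poset. -/
def incomp {P : Type*} [PartialOrder P] (x y : P) : Prop := ¬ x ≤ y ∧ ¬ y ≤ x

/-- A basis of `X` is a maximal pairwise orthogonal subset of `X`. -/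
def IsBasis {O : Type*} (r : O → O → Prop) (X B : Set O) : Prop :=
  B ⊆ X ∧ B.Pairwise r ∧ ∀ C : Set O, B ⊆ C → C ⊆ X → C.Pairwise r → C = B

/-- The orthoset is Dacey: every orthoclosed set equals the double
orthocomplement of each of its bases. -/
def IsDacey {O : Type*} (r : O → O → Prop) : Prop :=
  ∀ X : Set O, X = perp r (perp r X) →
    ∀ B : Set O, IsBasis r X B → X = perp r (perp r B)

/-- `(a,b,c,d)` form an N. -/
def FormN {P : Type*} [PartialOrder P] (a b c d : P) : Prop :=
  a < c ∧ b ⋖ c ∧ b < d ∧ incomp a b ∧ incomp a d ∧ incomp c d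

lemma incomp_symm {P : Type*} [PartialOrder P] {x y : P} (h : incomp x y) : incomp y x :=
  ⟨h.2, h.1⟩

lemma incomp_dual {P : Type*} [PartialOrder P] :
    (incomp (P := Pᵒᵈ)) = (incomp (P := P)) := by
  funext x y
  exact propext and_comm

/-- If an element of `X` is orthogonal to everything in a basis `B` of `X`, contradiction. -/
lemma not_mem_of_perpB {P : Type*} [PartialOrder P] {X B : Set P}
    (hB : IsBasis (incomp (P := P)) X B) {y : P} (hy : ∀ b ∈ B, incomp y b) : y ∉ X := by
  intro hyX
  have hC : (insert y B) = B := by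
    refine hB.2.2 _ (Set.subset_insert _ _) ?_ ?_
    · intro t ht
      rcases ht with rfl | ht
      · exact hyX
      · exact hB.1 ht
    · refine Set.Pairwise.insert hB.2.1 ?_
      intro b hb _
      exact ⟨hy b hb, incomp_symm (hy b hb)⟩
  have : y ∈ B := hC ▸ Set.mem_insert y B
  exact (hy y this).1 le_rfl

/-- Key lemma: from a "bad" configuration we can extract an N. -/
lemma key {P : Type*} [PartialOrder P] [Fintype P] {X B : Set P}
    (hX : X = perp incomp (perp incomp X)) (hB : IsBasis (incomp (P := P)) X B) :
    ∀ x : P, x ∈ X → ∀ y : P, (∀ b ∈ B, incomp y b) → y < x →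
      ∃ a b c d : P, FormN a b c d := by
  intro x
  induction x using WellFoundedLT.induction with
  | _ x ih =>
  intro hxX y hyB hyx
  -- y ∉ X
  have hyX : y ∉ X := not_mem_of_perpB hB hyB
  -- get z ∈ perp X with y < z
  have hz : ∃ z ∈ perp incomp X, ¬ incomp y z := by
    by_contra hcon
    push_neg at hcon
    exact hyX (hX ▸ hcon)
  obtain ⟨z, hzP, hznc⟩ := hz
  have hzx : incomp z x := hzP x hxX
  have hnzy : ¬ z ≤ y := fun hzy => hzx.1 (le_of_lt (lt_of_le_of_lt hzy hyx))
  have hyz : y < z := by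
    rcases not_and_or.mp hznc with h1 | h2
    · exact lt_of_le_of_ne (not_not.mp h1) (fun he => hzx.1 (he ▸ hyx.le))
    · exact absurd hnzy h2
  -- get b' ∈ B with b' < x
  have hxB : x ∉ B := fun hxB => (hyB x hxB).1 hyx.le
  have hb' : ∃ b' ∈ B, b' < x := by
    by_contra hcon
    push_neg at hcon
    have hall : ∀ b ∈ B, incomp x b := by
      intro b hb
      constructor
      · intro hxb
        rcases lt_or_eq_of_le hxb with hlt | rfl
        · exact (hyB b hb).1 (le_of_lt (hyx.trans hlt))
        · exact hxB hb
      · intro hbx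
        exact (hcon b hb) (lt_of_le_of_ne hbx (fun he => hxB (he ▸ hb)))
    have hC : (insert x B) = B := by
      refine hB.2.2 _ (Set.subset_insert _ _) ?_ ?_
      · intro t ht
        rcases ht with rfl | ht
        · exact hxX
        · exact hB.1 ht
      · refine Set.Pairwise.insert hB.2.1 ?_
        intro b hb _
        exact ⟨hall b hb, incomp_symm (hall b hb)⟩
    exact hxB (hC ▸ Set.mem_insert x B)
  obtain ⟨b', hb'B, hb'x⟩ := hb'
  have hzb' : incomp z b' := hzP b' (hB.1 hb'B)
  have hyb' : incomp y b' := hyB b' hb'B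
  -- a maximal m with y ≤ m < x
  obtain ⟨m, hmS, hmax⟩ : ∃ m ∈ {t : P | y ≤ t ∧ t < x},
      ∀ t ∈ {t : P | y ≤ t ∧ t < x}, id m ≤ id t → id m = id t := by
    obtain ⟨m, hm1, hm2⟩ := Set.Finite.exists_maximalFor id {t : P | y ≤ t ∧ t < x}
      (Set.toFinite _) ⟨y, le_rfl, hyx⟩
    exact ⟨m, hm1, fun t ht hle => le_antisymm hle (hm2 ht hle)⟩
  obtain ⟨hym, hmx⟩ := hmS
  have hcov : m ⋖ x := by
    refine ⟨hmx, fun t hmt htx => ?_⟩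
    exact hmt.ne (hmax t ⟨hym.trans hmt.le, htx⟩ hmt.le)
  by_cases hmz : m ≤ z
  · -- strong N (b', m, x, z)
    refine ⟨b', m, x, z, hb'x, hcov, lt_of_le_of_ne hmz (fun he => hzx.1 (he ▸ hmx.le)), ?_, incomp_symm hzb', incomp_symm hzx⟩
    exact ⟨fun h => hzb'.2 (h.trans hmz), fun h => hyb'.1 (hym.trans h)⟩
  by_cases hzm : z ≤ m
  · exact absurd (hzm.trans hmx.le) hzx.1
  -- m ⊥ z
  have hmnz : m ≠ y := fun he => hmz (he ▸ hyz.le)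
  have hym' : y < m := lt_of_le_of_ne hym (Ne.symm hmnz)
  by_cases hmX : m ∈ X
  · exact ih m hmx hmX y hyB hym'
  · -- get w ∈ perp X comparable to m, then m < w
    have hw : ∃ w ∈ perp incomp X, ¬ incomp m w := by
      by_contra hcon
      push_neg at hcon
      exact hmX (hX ▸ hcon)
    obtain ⟨w, hwP, hwnc⟩ := hw
    have hwx : incomp w x := hwP x hxX
    have hwb' : incomp w b' := hwP b' (hB.1 hb'B)
    have hnwm : ¬ w ≤ m := fun hwm => hwx.1 (hwm.trans hmx.le)
    have hmw : m < w := by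
      rcases not_and_or.mp hwnc with h1 | h2
      · exact lt_of_le_of_ne (not_not.mp h1) (fun he => hwx.1 (he ▸ hmx.le))
      · exact absurd hnwm h2
    have hb'm : incomp b' m := by
      constructor
      · intro h
        exact hwb'.2 (h.trans hmw.le)
      · intro h
        exact hyb'.1 (hym.trans h)
    exact ⟨b', m, x, w, hb'x, hcov, hmw, hb'm, incomp_symm hwb', incomp_symm hwx⟩

lemma formN_dual {P : Type*} [PartialOrder P] {a b c d : Pᵒᵈ}
    (h : FormN a b c d) :
    FormN (P := P) (OrderDual.ofDual d) (OrderDual.ofDual c)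
      (OrderDual.ofDual b) (OrderDual.ofDual a) := by
  obtain ⟨h1, h2, h3, h4, h5, h6⟩ := h
  refine ⟨h3, h2.ofDual, h1, ?_, ?_, ?_⟩
  · have := incomp_symm h6
    rwa [← incomp_dual]
  · have := incomp_symm h5
    rwa [← incomp_dual]
  · have := incomp_symm h4
    rwa [← incomp_dual]

theorem exists_N_of_not_dacey {P : Type*} [PartialOrder P] [Fintype P]
    (h : ¬ IsDacey (incomp (P := P))) :
    ∃ a b c d : P, FormN a b c d := by
  rw [IsDacey] at h
  push_neg at h
  obtain ⟨X, hX, B, hB, hne⟩ := h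
  -- B^⊥⊥ ⊆ X
  have hsub : perp incomp (perp incomp B) ⊆ X := by
    rw [hX]
    intro t ht u hu
    exact ht u (fun b hb => hu b (hB.1 hb))
  have hx : ∃ x ∈ X, x ∉ perp incomp (perp incomp B) := by
    by_contra hcon
    push_neg at hcon
    exact hne (Set.Subset.antisymm hcon hsub)
  obtain ⟨x, hxX, hxnp⟩ := hx
  have hy : ∃ y, (∀ b ∈ B, incomp y b) ∧ ¬ incomp x y := by
    by_contra hcon
    push_neg at hcon
    exact hxnp (fun u hu => hcon u hu)
  obtain ⟨y, hyB, hnc⟩ := hy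
  have hne' : x ≠ y := by
    rintro rfl
    exact not_mem_of_perpB hB hyB hxX
  rcases not_and_or.mp hnc with h1 | h2
  · -- x ≤ y, so x < y : dual case
    have hxy : x < y := lt_of_le_of_ne (not_not.mp h1) hne'
    have hX' : X = perp (incomp (P := Pᵒᵈ)) (perp (incomp (P := Pᵒᵈ)) X) := by
      rw [incomp_dual]; exact hX
    have hB' : IsBasis (incomp (P := Pᵒᵈ)) X B := by
      rw [incomp_dual]; exact hB
    have hyB' : ∀ b ∈ B, incomp (P := Pᵒᵈ) (OrderDual.toDual y) b := by
      rw [incomp_dual]; exact hyB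
    obtain ⟨a, b, c, d, hN⟩ := key (P := Pᵒᵈ) hX' hB' (OrderDual.toDual x) hxX
      (OrderDual.toDual y) hyB' hxy
    exact ⟨_, _, _, _, formN_dual hN⟩
  · -- y ≤ x, so y < x
    have hyx : y < x := lt_of_le_of_ne (not_not.mp h2) (Ne.symm hne')
    exact key hX hB x hxX y hyB hyx
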